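/- If (ρ^k, w^k) ∈ [0, R] × (−1, b) are sequences such that ρ^k·w^k·β(w^k) → 0 as k → ∞, where β : (−1, b) → ℝ is continuous, strictly increasing, and β(0) = 0, then ρ^k·|w^k| → 0 as k → ∞. -/

import Mathlib

open Set Filter

theorem rho_abs_w_tendsto_zero (R b : ℝ) (hR : 0 < R) (hb : 0 < b)
    (β : ℝ → ℝ) (hcont : ContinuousOn β (Set.Ioo (-1 : ℝ) b))
    (hmono : StrictMonoOn β (Set.Ioo (-1 : ℝ) b)) (hβ0 : β 0 = 0)
    (ρ w : ℕ → ℝ)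
    (hρ : ∀ k, ρ k ∈ Set.Icc (0 : ℝ) R)
    (hw : ∀ k, w k ∈ Set.Ioo (-1 : ℝ) b)
    (hlim : Filter.Tendsto (fun k => ρ k * w k * β (w k)) Filter.atTop (nhds 0)) :
    Filter.Tendsto (fun k => ρ k * |w k|) Filter.atTop (nhds 0) := by
  rw [Metric.tendsto_atTop]
  intro ε hε
  set M : ℝ := max 1 b with hM
  have hM1 : (1 : ℝ) ≤ M := le_max_left _ _
  have hM0 : (0 : ℝ) < M := lt_of_lt_of_le one_pos hM1
  set δ : ℝ := min (ε / (2 * R)) (min 1 b / 2) with hδ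
  have hδpos : 0 < δ := by
    apply lt_min
    · positivity
    · have : 0 < min 1 b := lt_min one_pos hb
      positivity
  have hδltb : δ < b := by
    have h1 : δ ≤ min 1 b / 2 := min_le_right _ _
    have h2 : min 1 b / 2 < b := by
      have := min_le_right (1 : ℝ) b
      linarith [lt_min one_pos hb]
    linarith
  have hδlt1 : δ < 1 := by
    have h1 : δ ≤ min 1 b / 2 := min_le_right _ _
    have h2 : min 1 b / 2 < 1 := by
      have := min_le_left (1 : ℝ) b
      linarith [lt_min one_pos hb]
    linarith
  have hδmem : δ ∈ Set.Ioo (-1 : ℝ) b := ⟨by linarith, hδltb⟩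
  have hnegδmem : (-δ) ∈ Set.Ioo (-1 : ℝ) b := ⟨by linarith, by linarith⟩
  have h0mem : (0 : ℝ) ∈ Set.Ioo (-1 : ℝ) b := ⟨by linarith, hb⟩
  have hβδ : 0 < β δ := by
    have := hmono h0mem hδmem hδpos
    rwa [hβ0] at this
  have hβnegδ : β (-δ) < 0 := by
    have := hmono hnegδmem h0mem (by linarith)
    rwa [hβ0] at this
  set c : ℝ := δ * min (β δ) (-(β (-δ))) with hc
  have hcpos : 0 < c := by
    apply mul_pos hδpos
    exact lt_min hβδ (by linarith)
  -- key: if δ ≤ |w k| then c ≤ w k * β (w k)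
  have key : ∀ k, δ ≤ |w k| → c ≤ w k * β (w k) := by
    intro k hk
    rcases abs_cases (w k) with ⟨habs, hsign⟩ | ⟨habs, hsign⟩
    · -- w k ≥ 0, so w k ≥ δ
      have hwδ : δ ≤ w k := by rw [habs] at hk; exact hk
      have hβle : β δ ≤ β (w k) := hmono.monotoneOn hδmem (hw k) hwδ
      have hβwpos : 0 < β (w k) := lt_of_lt_of_le hβδ hβle
      calc c ≤ δ * β δ := by
              apply mul_le_mul_of_nonneg_left (min_le_left _ _) hδpos.le
        _ ≤ w k * β (w k) := by
              apply mul_le_mul hwδ hβle hβδ.le (le_trans hδpos.le hwδ)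
    · -- w k ≤ 0, so w k ≤ -δ
      have hwδ : w k ≤ -δ := by rw [habs] at hk; linarith
      have hβle : β (w k) ≤ β (-δ) := hmono.monotoneOn (hw k) hnegδmem hwδ
      have h1 : c ≤ δ * (-(β (-δ))) :=
        mul_le_mul_of_nonneg_left (min_le_right _ _) hδpos.le
      have h2 : δ * (-(β (-δ))) ≤ (-(w k)) * (-(β (w k))) := by
        apply mul_le_mul (by linarith) (by linarith) (by linarith) (by linarith)
      calc c ≤ (-(w k)) * (-(β (w k))) := le_trans h1 h2
        _ = w k * β (w k) := by ring
  -- bound |w k| ≤ M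
  have hwM : ∀ k, |w k| ≤ M := by
    intro k
    rcases hw k with ⟨h1, h2⟩
    rw [abs_le]
    constructor
    · linarith
    · exact le_trans h2.le (le_max_right _ _)
  -- apply hlim with c * ε / (2 * M)
  have hη : 0 < c * ε / (2 * M) := by positivity
  rw [Metric.tendsto_atTop] at hlim
  obtain ⟨N, hN⟩ := hlim _ hη
  refine ⟨N, fun k hk => ?_⟩
  have hρk := hρ k
  rcases hρk with ⟨hρ0, hρR⟩
  rw [Real.dist_eq, sub_zero, abs_of_nonneg (by positivity)]
  rcases lt_or_ge (|w k|) δ with hcase | hcase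
  · -- small |w|
    have : ρ k * |w k| ≤ R * δ := by
      apply mul_le_mul hρR hcase.le (abs_nonneg _) (by linarith)
    have hRδ : R * δ ≤ ε / 2 := by
      have : δ ≤ ε / (2 * R) := min_le_left _ _
      calc R * δ ≤ R * (ε / (2 * R)) := by nlinarith
        _ = ε / 2 := by field_simp
    linarith
  · -- large |w|
    have hkey := key k hcase
    have hNk := hN k hk
    rw [Real.dist_eq, sub_zero] at hNk
    have h1 : ρ k * (w k * β (w k)) < c * ε / (2 * M) := by
      calc ρ k * (w k * β (w k)) ≤ |ρ k * w k * β (w k)| := by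
            rw [mul_assoc]; exact le_abs_self _
        _ < c * ε / (2 * M) := hNk
    have h2 : ρ k * c ≤ ρ k * (w k * β (w k)) :=
      mul_le_mul_of_nonneg_left hkey hρ0
    have hρsmall : ρ k < ε / (2 * M) := by
      have h3 : ρ k * c < c * ε / (2 * M) := lt_of_le_of_lt h2 h1
      rw [lt_div_iff₀ (by positivity : (0:ℝ) < 2 * M)] at h3 ⊢
      nlinarith
    calc ρ k * |w k| ≤ ρ k * M := mul_le_mul_of_nonneg_left (hwM k) hρ0
      _ < ε / (2 * M) * M := by nlinarith
      _ = ε / 2 := by field_simp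
      _ < ε := by linarith
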